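/- Assume cut elimination for NEL (i.e., NEL is equivalent to SNEL ∪ {∘↓} for provability). Then for any two structures T and R: there is a derivation in SNEL from T to R if and only if there is a proof (derivation with no premise) in NEL of the structure T̄ ⅋ R. -/

import Mathlib

/-!
Deep-inference presentation of NEL (non-commutative exponential linear logic),
following "A System of Interaction and Structure IV: The Exponentials and Decomposition".
-/

/-- NEL structures: atoms (with a polarity), the unit ∘, par ⅋, tensor ⊗,
seq ◁, and the modalities ? and !. -/
inductive Str : Type
  | atom : ℕ → Bool → Str
  | unit : Str
  | par : Str → Str → Str
  | ten : Str → Str → Str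
  | seq : Str → Str → Str
  | quest : Str → Str
  | bang : Str → Str

namespace Str

/-- De Morgan negation, pushed to the atoms; seq does not swap its arguments. -/
def neg : Str → Str
  | atom n b => atom n (!b)
  | unit => unit
  | par a b => ten (neg a) (neg b)
  | ten a b => par (neg a) (neg b)
  | seq a b => seq (neg a) (neg b)
  | quest a => bang (neg a)
  | bang a => quest (neg a)

/-- The syntactic equivalence `=` on NEL structures: associativity of ⅋, ⊗, ◁,
commutativity of ⅋ and ⊗, unit laws for ∘, and contextual closure. -/
inductive Equiv : Str → Str → Prop
  | refl (a) : Equiv a a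
  | symm {a b} : Equiv a b → Equiv b a
  | trans {a b c} : Equiv a b → Equiv b c → Equiv a c
  | parAssoc (a b c) : Equiv (par (par a b) c) (par a (par b c))
  | tenAssoc (a b c) : Equiv (ten (ten a b) c) (ten a (ten b c))
  | seqAssoc (a b c) : Equiv (seq (seq a b) c) (seq a (seq b c))
  | parComm (a b) : Equiv (par a b) (par b a)
  | tenComm (a b) : Equiv (ten a b) (ten b a)
  | parUnit (a) : Equiv (par unit a) a
  | tenUnit (a) : Equiv (ten unit a) a
  | seqUnitL (a) : Equiv (seq unit a) a
  | seqUnitR (a) : Equiv (seq a unit) a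
  | parCongr {a a' b b'} : Equiv a a' → Equiv b b' → Equiv (par a b) (par a' b')
  | tenCongr {a a' b b'} : Equiv a a' → Equiv b b' → Equiv (ten a b) (ten a' b')
  | seqCongr {a a' b b'} : Equiv a a' → Equiv b b' → Equiv (seq a b) (seq a' b')
  | questCongr {a a'} : Equiv a a' → Equiv (quest a) (quest a')
  | bangCongr {a a'} : Equiv a a' → Equiv (bang a) (bang a')

end Str

/-- Contexts: structures with a hole that is not in the scope of a negation. -/
inductive Ctx : Type
  | hole
  | parL (C : Ctx) (T : Str)
  | parR (T : Str) (C : Ctx)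
  | tenL (C : Ctx) (T : Str)
  | tenR (T : Str) (C : Ctx)
  | seqL (C : Ctx) (T : Str)
  | seqR (T : Str) (C : Ctx)
  | quest (C : Ctx)
  | bang (C : Ctx)

/-- Plugging a structure into the hole of a context. -/
def Ctx.fill : Ctx → Str → Str
  | .hole, R => R
  | .parL C T, R => .par (C.fill R) T
  | .parR T C, R => .par T (C.fill R)
  | .tenL C T, R => .ten (C.fill R) T
  | .tenR T C, R => .ten T (C.fill R)
  | .seqL C T, R => .seq (C.fill R) T
  | .seqR T C, R => .seq T (C.fill R)
  | .quest C, R => .quest (C.fill R)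
  | .bang C, R => .bang (C.fill R)

/-- A set of (instances of) inference rules, given as a relation
from premise to conclusion. -/
abbrev Rules := Str → Str → Prop

/-- An instance of a rule of `r` applied deep inside a context. -/
def DeepStep (r : Rules) (P Q : Str) : Prop :=
  ∃ (C : Ctx) (a b : Str), r a b ∧ P = C.fill a ∧ Q = C.fill b

/-- A single inference step: a deep rule application, modulo the
syntactic equivalence on premise and conclusion. -/
def Step (r : Rules) (P Q : Str) : Prop :=
  ∃ P' Q', Str.Equiv P P' ∧ DeepStep r P' Q' ∧ Str.Equiv Q' Q

/-- A derivation in the system `r` from premise `T` (top) to conclusion `R`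
(bottom): a finite chain of inference steps modulo syntactic equivalence. -/
def Deriv (r : Rules) (T R : Str) : Prop :=
  Str.Equiv T R ∨ Relation.TransGen (Step r) T R

/- The rules of SNEL, written premise → conclusion (read downwards). -/

/-- atomic interaction ai↓ : S{∘} → S⟨a ⅋ ā⟩ -/
inductive aiDown : Str → Str → Prop
  | mk (n : ℕ) (b : Bool) : aiDown .unit (.par (.atom n b) (.atom n (!b)))

/-- atomic cut ai↑ : S⟨a ⊗ ā⟩ → S{∘} -/
inductive aiUp : Str → Str → Prop
  | mk (n : ℕ) (b : Bool) : aiUp (.ten (.atom n b) (.atom n (!b))) .unit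

/-- switch s : S⟨(R ⅋ U) ⊗ T⟩ → S⟨(R ⊗ T) ⅋ U⟩ -/
inductive sw : Str → Str → Prop
  | mk (R U T : Str) : sw (.ten (.par R U) T) (.par (.ten R T) U)

/-- seq q↓ : S⟨(R ◁ T) ⅋ (U ◁ V)⟩ → S⟨(R ⅋ U) ◁ (T ⅋ V)⟩ -/
inductive qDown : Str → Str → Prop
  | mk (R T U V : Str) :
      qDown (.par (.seq R T) (.seq U V)) (.seq (.par R U) (.par T V))

/-- coseq q↑ : S⟨(R ⊗ T) ◁ (U ⊗ V)⟩ → S⟨(R ◁ U) ⊗ (T ◁ V)⟩ -/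
inductive qUp : Str → Str → Prop
  | mk (R T U V : Str) :
      qUp (.seq (.ten R T) (.ten U V)) (.ten (.seq R U) (.seq T V))

/-- promotion p↓ : S{!(R ⅋ T)} → S⟨!R ⅋ ?T⟩ -/
inductive pDown : Str → Str → Prop
  | mk (R T : Str) : pDown (.bang (.par R T)) (.par (.bang R) (.quest T))

/-- copromotion p↑ : S⟨?T ⊗ !R⟩ → S{?(T ⊗ R)} -/
inductive pUp : Str → Str → Prop
  | mk (T R : Str) : pUp (.ten (.quest T) (.bang R)) (.quest (.ten T R))

/-- empty e↓ : S{∘} → S{!∘} -/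
inductive eDown : Str → Str → Prop
  | mk : eDown .unit (.bang .unit)

/-- coempty e↑ : S{?∘} → S{∘} -/
inductive eUp : Str → Str → Prop
  | mk : eUp (.quest .unit) .unit

/-- weakening w↓ : S{∘} → S{?R} -/
inductive wDown : Str → Str → Prop
  | mk (R : Str) : wDown .unit (.quest R)

/-- coweakening w↑ : S{!R} → S{∘} -/
inductive wUp : Str → Str → Prop
  | mk (R : Str) : wUp (.bang R) .unit

/-- absorption b↓ : S⟨?R ⅋ R⟩ → S{?R} -/
inductive bDown : Str → Str → Prop
  | mk (R : Str) : bDown (.par (.quest R) R) (.quest R)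

/-- coabsorption b↑ : S{!R} → S⟨!R ⊗ R⟩ -/
inductive bUp : Str → Str → Prop
  | mk (R : Str) : bUp (.bang R) (.ten (.bang R) R)

/-- digging g↓ : S{??R} → S{?R} -/
inductive gDown : Str → Str → Prop
  | mk (R : Str) : gDown (.quest (.quest R)) (.quest R)

/-- codigging g↑ : S{!R} → S{!!R} -/
inductive gUp : Str → Str → Prop
  | mk (R : Str) : gUp (.bang R) (.bang (.bang R))

/-- general interaction i↓ : S{∘} → S⟨R ⅋ R̄⟩ -/
inductive iDown : Str → Str → Prop
  | mk (R : Str) : iDown .unit (.par R R.neg)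

/-- general cut i↑ : S⟨R ⊗ R̄⟩ → S{∘} -/
inductive iUp : Str → Str → Prop
  | mk (R : Str) : iUp (.ten R R.neg) .unit

/-- The unit axiom ∘↓ of NEL.  It has no premise; within a derivation
(which always has a premise) it can therefore only act vacuously, which
we model by the trivial rewrite ∘ → ∘. -/
inductive unitAx : Str → Str → Prop
  | mk : unitAx .unit .unit

/-- System SNEL. -/
def snel : Rules :=
  aiDown ⊔ aiUp ⊔ sw ⊔ qDown ⊔ qUp ⊔ pDown ⊔ pUp ⊔ eDown ⊔ eUp ⊔
    wDown ⊔ wUp ⊔ bDown ⊔ bUp ⊔ gDown ⊔ gUp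

/-- The down fragment of SNEL together with the unit axiom: system NEL. -/
def nel : Rules :=
  unitAx ⊔ aiDown ⊔ sw ⊔ qDown ⊔ pDown ⊔ eDown ⊔ wDown ⊔ bDown ⊔ gDown

/-- The system {s, q↓, q↑}. -/
def swq : Rules := sw ⊔ qDown ⊔ qUp

/-- The hard core SNELh = {s, q↓, q↑, p↓, p↑}. -/
def snelh : Rules := sw ⊔ qDown ⊔ qUp ⊔ pDown ⊔ pUp

/-! ### Auxiliary infrastructure -/

namespace Str

theorem neg_neg : ∀ a : Str, a.neg.neg = a
  | atom n b => by simp [neg]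
  | unit => rfl
  | par a b => by simp [neg, neg_neg a, neg_neg b]
  | ten a b => by simp [neg, neg_neg a, neg_neg b]
  | seq a b => by simp [neg, neg_neg a, neg_neg b]
  | quest a => by simp [neg, neg_neg a]
  | bang a => by simp [neg, neg_neg a]

namespace Equiv

instance : Trans Equiv Equiv Equiv := ⟨Equiv.trans⟩

theorem parUnitR (a : Str) : Equiv (par a unit) a :=
  (parComm a unit).trans (parUnit a)

theorem tenUnitR (a : Str) : Equiv (ten a unit) a :=
  (tenComm a unit).trans (tenUnit a)

end Equiv
end Str

/-- Composition of contexts. -/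
def Ctx.comp : Ctx → Ctx → Ctx
  | .hole, D => D
  | .parL C T, D => .parL (C.comp D) T
  | .parR T C, D => .parR T (C.comp D)
  | .tenL C T, D => .tenL (C.comp D) T
  | .tenR T C, D => .tenR T (C.comp D)
  | .seqL C T, D => .seqL (C.comp D) T
  | .seqR T C, D => .seqR T (C.comp D)
  | .quest C, D => .quest (C.comp D)
  | .bang C, D => .bang (C.comp D)

theorem Ctx.fill_comp (C D : Ctx) (a : Str) :
    (C.comp D).fill a = C.fill (D.fill a) := by
  induction C <;> simp [comp, fill, *]

theorem Ctx.fill_equiv (C : Ctx) {a b : Str} (h : Str.Equiv a b) :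
    Str.Equiv (C.fill a) (C.fill b) := by
  induction C with
  | hole => exact h
  | parL C T ih => exact Str.Equiv.parCongr ih (Str.Equiv.refl T)
  | parR T C ih => exact Str.Equiv.parCongr (Str.Equiv.refl T) ih
  | tenL C T ih => exact Str.Equiv.tenCongr ih (Str.Equiv.refl T)
  | tenR T C ih => exact Str.Equiv.tenCongr (Str.Equiv.refl T) ih
  | seqL C T ih => exact Str.Equiv.seqCongr ih (Str.Equiv.refl T)
  | seqR T C ih => exact Str.Equiv.seqCongr (Str.Equiv.refl T) ih
  | quest C ih => exact Str.Equiv.questCongr ih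
  | bang C ih => exact Str.Equiv.bangCongr ih

theorem DeepStep.fill {r : Rules} (C : Ctx) {a b : Str} (h : DeepStep r a b) :
    DeepStep r (C.fill a) (C.fill b) := by
  obtain ⟨D, x, y, hr, ha, hb⟩ := h
  exact ⟨C.comp D, x, y, hr, by rw [Ctx.fill_comp, ha], by rw [Ctx.fill_comp, hb]⟩

theorem Step.fill {r : Rules} (C : Ctx) {a b : Str} (h : Step r a b) :
    Step r (C.fill a) (C.fill b) := by
  obtain ⟨P, Q, e1, d, e2⟩ := h
  exact ⟨C.fill P, C.fill Q, C.fill_equiv e1, d.fill C, C.fill_equiv e2⟩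

theorem Step.equiv_left {r : Rules} {a P Q : Str} (e : Str.Equiv a P)
    (h : Step r P Q) : Step r a Q := by
  obtain ⟨P', Q', e1, d, e2⟩ := h
  exact ⟨P', Q', e.trans e1, d, e2⟩

theorem Step.equiv_right {r : Rules} {P Q b : Str} (h : Step r P Q)
    (e : Str.Equiv Q b) : Step r P b := by
  obtain ⟨P', Q', e1, d, e2⟩ := h
  exact ⟨P', Q', e1, d, e2.trans e⟩

theorem Deriv.ofEquiv {r : Rules} {a b : Str} (e : Str.Equiv a b) : Deriv r a b :=
  Or.inl e

theorem Deriv.rfl {r : Rules} {a : Str} : Deriv r a a :=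
  Or.inl (Str.Equiv.refl a)

theorem Deriv.trans {r : Rules} {a b c : Str} :
    Deriv r a b → Deriv r b c → Deriv r a c := by
  rintro (e1 | t1) (e2 | t2)
  · exact Or.inl (e1.trans e2)
  · right
    induction t2 with
    | single h => exact .single (h.equiv_left e1)
    | tail _ h ih => exact .tail ih h
  · right
    induction t1 with
    | single h => exact .single (h.equiv_right e2)
    | tail t h ih => exact .tail t (h.equiv_right e2)
  · exact Or.inr (t1.trans t2)

instance {r : Rules} : Trans (Deriv r) (Deriv r) (Deriv r) := ⟨Deriv.trans⟩

theorem Deriv.fill {r : Rules} (C : Ctx) {a b : Str} (h : Deriv r a b) :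
    Deriv r (C.fill a) (C.fill b) := by
  rcases h with e | t
  · exact Or.inl (C.fill_equiv e)
  · right
    induction t with
    | single h => exact .single (h.fill C)
    | tail _ h ih => exact .tail ih (h.fill C)

/-- A single deep rule application, modulo equivalence, as a derivation. -/
theorem Deriv.deep {r : Rules} (C : Ctx) {P a b Q : Str}
    (e1 : Str.Equiv P (C.fill a)) (h : r a b) (e2 : Str.Equiv (C.fill b) Q) :
    Deriv r P Q :=
  Or.inr (.single ⟨C.fill a, C.fill b, e1, ⟨C, a, b, h, Eq.refl _, Eq.refl _⟩, e2⟩)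

/-- A derivation applied deep inside a context, modulo equivalence. -/
theorem Deriv.deepD {r : Rules} (C : Ctx) {P a b Q : Str}
    (e1 : Str.Equiv P (C.fill a)) (h : Deriv r a b) (e2 : Str.Equiv (C.fill b) Q) :
    Deriv r P Q :=
  (Deriv.ofEquiv e1).trans ((h.fill C).trans (Deriv.ofEquiv e2))

theorem Deriv.mono {r r' : Rules} (hr : ∀ a b, r a b → r' a b) {P Q : Str}
    (h : Deriv r P Q) : Deriv r' P Q := by
  rcases h with e | t
  · exact Or.inl e
  · right
    refine Relation.TransGen.mono (fun a b hab => ?_) _ _ t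
    obtain ⟨P', Q', e1, ⟨C, x, y, hxy, hx, hy⟩, e2⟩ := hab
    exact ⟨P', Q', e1, ⟨C, x, y, hr _ _ hxy, hx, hy⟩, e2⟩

/- Rule inclusions. -/

theorem snel_of_aiDown {a b : Str} (h : aiDown a b) : snel a b := by
  simp only [snel, Pi.sup_apply, sup_Prop_eq]; tauto

theorem snel_of_aiUp {a b : Str} (h : aiUp a b) : snel a b := by
  simp only [snel, Pi.sup_apply, sup_Prop_eq]; tauto

theorem snel_of_sw {a b : Str} (h : sw a b) : snel a b := by
  simp only [snel, Pi.sup_apply, sup_Prop_eq]; tauto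

theorem snel_of_qDown {a b : Str} (h : qDown a b) : snel a b := by
  simp only [snel, Pi.sup_apply, sup_Prop_eq]; tauto

theorem snel_of_qUp {a b : Str} (h : qUp a b) : snel a b := by
  simp only [snel, Pi.sup_apply, sup_Prop_eq]; tauto

theorem snel_of_pDown {a b : Str} (h : pDown a b) : snel a b := by
  simp only [snel, Pi.sup_apply, sup_Prop_eq]; tauto

theorem snel_of_pUp {a b : Str} (h : pUp a b) : snel a b := by
  simp only [snel, Pi.sup_apply, sup_Prop_eq]; tauto

theorem snel_of_eDown {a b : Str} (h : eDown a b) : snel a b := by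
  simp only [snel, Pi.sup_apply, sup_Prop_eq]; tauto

theorem snel_of_eUp {a b : Str} (h : eUp a b) : snel a b := by
  simp only [snel, Pi.sup_apply, sup_Prop_eq]; tauto

theorem nel_sub {a b : Str} (h : nel a b) : snel a b ∨ unitAx a b := by
  simp only [nel, snel, Pi.sup_apply, sup_Prop_eq] at h ⊢; tauto

theorem snel_le_sup (a b : Str) (h : snel a b) : (snel ⊔ unitAx) a b := by
  simp only [Pi.sup_apply, sup_Prop_eq]; exact Or.inl h

open Str Str.Equiv

/-- `R ⅋ T → R ◁ T` is derivable in SNEL (via q↓ and the unit laws). -/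
theorem parSeq (a b : Str) : Deriv snel (.par a b) (.seq a b) :=
  Deriv.deep .hole
    (parCongr (seqUnitR a).symm (seqUnitL b).symm)
    (snel_of_qDown (qDown.mk a .unit .unit b))
    (seqCongr (parUnitR a) (parUnit b))

/-- `R ◁ T → R ⊗ T` is derivable in SNEL (via q↑ and the unit laws). -/
theorem seqTen (a b : Str) : Deriv snel (.seq a b) (.ten a b) :=
  Deriv.deep .hole
    (seqCongr (tenUnitR a).symm (tenUnit b).symm)
    (snel_of_qUp (qUp.mk a .unit .unit b))
    (tenCongr (seqUnitR a) (seqUnitL b))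

/-- General interaction i↓ is derivable in SNEL. -/
theorem idown : ∀ R : Str, Deriv snel .unit (.par R R.neg)
  | .atom n b => Deriv.deep .hole (Str.Equiv.refl _) (snel_of_aiDown (aiDown.mk n b))
      (Str.Equiv.refl _)
  | .unit => Deriv.ofEquiv (parUnit .unit).symm
  | .par a b =>
      ((idown a).trans
        (Deriv.deepD (.parR a (.tenR a.neg .hole))
          (parCongr (Str.Equiv.refl a) (tenUnitR a.neg).symm) (idown b)
          (Str.Equiv.refl _))).trans
        (Deriv.deep (.parR a .hole)
          (parCongr (Str.Equiv.refl a)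
            ((tenComm a.neg (par b b.neg)).trans
              (tenCongr (parComm b b.neg) (Str.Equiv.refl a.neg))))
          (snel_of_sw (sw.mk b.neg b a.neg))
          ((parCongr (Str.Equiv.refl a) (parComm (ten b.neg a.neg) b)).trans
            ((parAssoc a b (ten b.neg a.neg)).symm.trans
              (parCongr (Str.Equiv.refl (par a b)) (tenComm b.neg a.neg)))))
  | .ten a b =>
      ((idown a).trans
        (Deriv.deepD (.parL (.tenR a .hole) a.neg)
          (parCongr (tenUnitR a).symm (Str.Equiv.refl a.neg)) (idown b)
          (Str.Equiv.refl _))).trans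
        (Deriv.deep (.parL .hole a.neg)
          (parCongr (tenComm a (par b b.neg)) (Str.Equiv.refl a.neg))
          (snel_of_sw (sw.mk b b.neg a))
          ((parAssoc (ten b a) b.neg a.neg).trans
            (parCongr (tenComm b a) (parComm b.neg a.neg))))
  | .seq a b =>
      (Deriv.ofEquiv (parUnit .unit).symm).trans <|
      (Deriv.deepD (.parL .hole .unit) (Str.Equiv.refl _) (idown a)
        (Str.Equiv.refl _)).trans <|
      (Deriv.deepD (.parR (par a a.neg) .hole) (Str.Equiv.refl _) (idown b)
        (Str.Equiv.refl _)).trans <|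
      (Deriv.ofEquiv
        ((parAssoc a a.neg (par b b.neg)).trans <|
          (parCongr (Str.Equiv.refl a)
            ((parAssoc a.neg b b.neg).symm.trans <|
              (parCongr (parComm a.neg b) (Str.Equiv.refl b.neg)).trans <|
              parAssoc b a.neg b.neg)).trans <|
          (parAssoc a b (par a.neg b.neg)).symm)).trans <|
      (Deriv.deepD (.parL .hole (par a.neg b.neg)) (Str.Equiv.refl _) (parSeq a b)
        (Str.Equiv.refl _)).trans <|
      Deriv.deepD (.parR (seq a b) .hole) (Str.Equiv.refl _) (parSeq a.neg b.neg)
        (Str.Equiv.refl _)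
  | .quest a =>
      (Deriv.deep .hole (Str.Equiv.refl _) (snel_of_eDown eDown.mk)
        (Str.Equiv.refl _)).trans <|
      (Deriv.deepD (.bang .hole) (Str.Equiv.refl _) (idown a) (Str.Equiv.refl _)).trans <|
      Deriv.deep .hole (bangCongr (parComm a a.neg))
        (snel_of_pDown (pDown.mk a.neg a)) (parComm (bang a.neg) (quest a))
  | .bang a =>
      (Deriv.deep .hole (Str.Equiv.refl _) (snel_of_eDown eDown.mk)
        (Str.Equiv.refl _)).trans <|
      (Deriv.deepD (.bang .hole) (Str.Equiv.refl _) (idown a) (Str.Equiv.refl _)).trans <|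
      Deriv.deep .hole (Str.Equiv.refl _) (snel_of_pDown (pDown.mk a a.neg))
        (Str.Equiv.refl _)

/-- General cut i↑ is derivable in SNEL. -/
theorem iup : ∀ R : Str, Deriv snel (.ten R R.neg) .unit
  | .atom n b => Deriv.deep .hole (Str.Equiv.refl _) (snel_of_aiUp (aiUp.mk n b))
      (Str.Equiv.refl _)
  | .unit => Deriv.ofEquiv (tenUnit .unit)
  | .par a b =>
      (Deriv.deep (.tenL .hole b.neg)
        (tenAssoc (par a b) a.neg b.neg).symm
        (snel_of_sw (sw.mk a b a.neg)) (Str.Equiv.refl _)).trans <|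
      (Deriv.deepD (.tenL (.parL .hole b) b.neg) (Str.Equiv.refl _) (iup a)
        (Str.Equiv.refl _)).trans <|
      (Deriv.ofEquiv (tenCongr (parUnit b) (Str.Equiv.refl b.neg))).trans (iup b)
  | .ten a b =>
      (Deriv.deep (.tenL .hole b)
        ((tenComm (ten a b) (par a.neg b.neg)).trans
          (tenAssoc (par a.neg b.neg) a b).symm)
        (snel_of_sw (sw.mk a.neg b.neg a)) (Str.Equiv.refl _)).trans <|
      (Deriv.deepD (.tenL (.parL .hole b.neg) b) (Str.Equiv.refl _)
        ((Deriv.ofEquiv (tenComm a.neg a)).trans (iup a)) (Str.Equiv.refl _)).trans <|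
      (Deriv.ofEquiv (tenCongr (parUnit b.neg) (Str.Equiv.refl b))).trans
        ((Deriv.ofEquiv (tenComm b.neg b)).trans (iup b))
  | .seq a b =>
      (Deriv.deepD (.tenL .hole (seq a.neg b.neg)) (Str.Equiv.refl _) (seqTen a b)
        (Str.Equiv.refl _)).trans <|
      (Deriv.deepD (.tenR (ten a b) .hole) (Str.Equiv.refl _) (seqTen a.neg b.neg)
        (Str.Equiv.refl _)).trans <|
      (Deriv.ofEquiv
        ((tenAssoc a b (ten a.neg b.neg)).trans <|
          (tenCongr (Str.Equiv.refl a)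
            ((tenAssoc b a.neg b.neg).symm.trans <|
              (tenCongr (tenComm b a.neg) (Str.Equiv.refl b.neg)).trans <|
              tenAssoc a.neg b b.neg)).trans <|
          (tenAssoc a a.neg (ten b b.neg)).symm)).trans <|
      (Deriv.deepD (.tenL .hole (ten b b.neg)) (Str.Equiv.refl _) (iup a)
        (Str.Equiv.refl _)).trans <|
      (Deriv.ofEquiv (tenUnit (ten b b.neg))).trans (iup b)
  | .quest a =>
      (Deriv.deep .hole (Str.Equiv.refl _) (snel_of_pUp (pUp.mk a a.neg))
        (Str.Equiv.refl _)).trans <|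
      (Deriv.deepD (.quest .hole) (Str.Equiv.refl _) (iup a) (Str.Equiv.refl _)).trans <|
      Deriv.deep .hole (Str.Equiv.refl _) (snel_of_eUp eUp.mk) (Str.Equiv.refl _)
  | .bang a =>
      (Deriv.deep .hole (tenComm (bang a) (quest a.neg))
        (snel_of_pUp (pUp.mk a.neg a)) (Str.Equiv.refl _)).trans <|
      (Deriv.deepD (.quest .hole) (Str.Equiv.refl _)
        ((Deriv.ofEquiv (tenComm a.neg a)).trans (iup a)) (Str.Equiv.refl _)).trans <|
      Deriv.deep .hole (Str.Equiv.refl _) (snel_of_eUp eUp.mk) (Str.Equiv.refl _)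

/-- Every NEL step is a derivation in SNEL (the axiom ∘↓ acts vacuously). -/
theorem step_nel_snel {P Q : Str} (h : Step nel P Q) : Deriv snel P Q := by
  obtain ⟨P', Q', e1, ⟨C, x, y, hr, hx, hy⟩, e2⟩ := h
  rcases nel_sub hr with hs | hu
  · exact Or.inr (.single ⟨P', Q', e1, ⟨C, x, y, hs, hx, hy⟩, e2⟩)
  · cases hu
    subst hx; subst hy
    exact Deriv.ofEquiv (e1.trans e2)

theorem deriv_nel_snel {P Q : Str} (h : Deriv nel P Q) : Deriv snel P Q := by
  rcases h with e | t
  · exact Deriv.ofEquiv e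
  · induction t with
    | single h => exact step_nel_snel h
    | tail _ h ih => exact ih.trans (step_nel_snel h)

/-- Assuming cut elimination for NEL (SNEL ∪ {∘↓} and NEL
prove the same structures, a proof being a derivation from the unit ∘
provided by the axiom ∘↓), for any structures T and R there is a derivation
in SNEL from T to R iff there is a proof in NEL of T̄ ⅋ R. -/
theorem deduction_via_cut_elimination
    (cutElim : ∀ R : Str, Deriv (snel ⊔ unitAx) .unit R ↔ Deriv nel .unit R) :
    ∀ T R : Str, Deriv snel T R ↔ Deriv nel .unit (.par T.neg R) := by
  intro T R
  constructor
  · intro h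
    refine (cutElim _).mp (Deriv.mono snel_le_sup ?_)
    have d1 : Deriv snel .unit (.par T.neg T) := by
      have := idown T.neg; rwa [Str.neg_neg] at this
    exact d1.trans (h.fill (.parR T.neg .hole))
  · intro h
    have h' : Deriv snel .unit (.par T.neg R) := deriv_nel_snel h
    exact (Deriv.ofEquiv (Str.Equiv.tenUnitR T).symm).trans <|
      (h'.fill (.tenR T .hole)).trans <|
      (Deriv.deep .hole (Str.Equiv.tenComm T (.par T.neg R))
        (snel_of_sw (sw.mk T.neg R T)) (Str.Equiv.refl _)).trans <|
      (Deriv.deepD (.parL .hole R) (Str.Equiv.refl _)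
        ((Deriv.ofEquiv (Str.Equiv.tenComm T.neg T)).trans (iup T))
        (Str.Equiv.refl _)).trans <|
      Deriv.ofEquiv (Str.Equiv.parUnit R)
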